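/- For every ρ ∈ (0,1] there exists ξ0 > 0 such that for every ξ ∈ (0, ξ0] the following holds. If H is a bipartite graph with bipartition (A, B) that is upper (ρ, ξ)-regular, such that the number of vertices of H is at most ρ|A|/ξ and every vertex v ∈ A satisfies d_H(v) ≥ 2ρ|A|, then H has a matching covering A. -/

import Mathlib

open Finset

/-- The number of edges of a graph `G` between two (disjoint) vertex sets `S` and `T`. -/
def edgesBetween {V : Type*} [DecidableEq V] (G : SimpleGraph V) [DecidableRel G.Adj]
    (S T : Finset V) : ℕ :=
  ((S ×ˢ T).filter fun p => G.Adj p.1 p.2).card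

/-- A graph `G` on `N` vertices is *upper `(ρ, ξ)`-regular* if for all disjoint vertex sets
`S, T` of size at least `ξN`, the number of edges between `S` and `T` is at most
`(ρ + ξ)|S||T|`. -/
def UpperRegular {N : ℕ} (G : SimpleGraph (Fin N)) [DecidableRel G.Adj] (ρ ξ : ℝ) : Prop :=
  ∀ S T : Finset (Fin N), Disjoint S T →
    ξ * N ≤ (S.card : ℝ) → ξ * N ≤ (T.card : ℝ) →
    (edgesBetween G S T : ℝ) ≤ (ρ + ξ) * S.card * T.card

/-- From an injective choice of neighbours we can build a matching covering `A`. -/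
lemma exists_matching_of_injective {V : Type*} (G : SimpleGraph V)
    (A B : Finset V) (hAB : Disjoint A B)
    (hbip : ∀ u v, G.Adj u v → (u ∈ A ∧ v ∈ B) ∨ (u ∈ B ∧ v ∈ A))
    (f : {x // x ∈ A} → V) (hinj : Function.Injective f)
    (hadj : ∀ a : {x // x ∈ A}, G.Adj ↑a (f a)) :
    ∃ M : SimpleGraph.Subgraph G, M.IsMatching ∧ ∀ a ∈ A, a ∈ M.verts := by
  have hfB : ∀ a : {x // x ∈ A}, f a ∈ B := by
    intro a
    rcases hbip _ _ (hadj a) with ⟨_, h⟩ | ⟨h, _⟩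
    · exact h
    · exact absurd h (Finset.disjoint_left.mp hAB a.2)
  have hfA : ∀ a : {x // x ∈ A}, f a ∉ A := fun a => Finset.disjoint_right.mp hAB (hfB a)
  refine ⟨⟨↑A ∪ Set.range f,
    fun u v => ∃ a : {x // x ∈ A}, (u = ↑a ∧ v = f a) ∨ (v = ↑a ∧ u = f a), ?_, ?_, ?_⟩, ?_, ?_⟩
  · rintro u v ⟨a, ⟨rfl, rfl⟩ | ⟨rfl, rfl⟩⟩
    · exact hadj a
    · exact (hadj a).symm
  · rintro u v ⟨a, ⟨rfl, rfl⟩ | ⟨rfl, rfl⟩⟩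
    · exact Or.inl a.2
    · exact Or.inr ⟨a, rfl⟩
  · constructor
    rintro u v ⟨a, ⟨rfl, rfl⟩ | ⟨rfl, rfl⟩⟩
    · exact ⟨a, Or.inr ⟨rfl, rfl⟩⟩
    · exact ⟨a, Or.inl ⟨rfl, rfl⟩⟩
  · rintro v (hv | ⟨a, rfl⟩)
    · refine ⟨f ⟨v, hv⟩, ⟨⟨v, hv⟩, Or.inl ⟨rfl, rfl⟩⟩, ?_⟩
      rintro w ⟨a', ⟨h1, rfl⟩ | ⟨rfl, h2⟩⟩
      · have : (⟨v, hv⟩ : {x // x ∈ A}) = a' := Subtype.ext h1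
        rw [this]
      · exact absurd hv (by rw [h2]; exact hfA a')
    · refine ⟨↑a, ⟨a, Or.inr ⟨rfl, rfl⟩⟩, ?_⟩
      rintro w ⟨a', ⟨h1, rfl⟩ | ⟨rfl, h2⟩⟩
      · exact absurd (h1 ▸ a'.2) (hfA a)
      · rw [hinj h2.symm]
  · intro a ha
    exact Or.inl ha

/-- An upper `(ρ, ξ)`-regular bipartite graph with bipartition `(A, B)`, at most `ρ|A|/ξ`
vertices, and every vertex of `A` of degree at least `2ρ|A|`, has a matching covering `A`. -/
theorem bipartite_regular_matching :
    ∀ ρ : ℝ, 0 < ρ → ρ ≤ 1 →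
      ∃ ξ0 : ℝ, 0 < ξ0 ∧ ∀ ξ : ℝ, 0 < ξ → ξ ≤ ξ0 →
        ∀ (N : ℕ) (G : SimpleGraph (Fin N)) [DecidableRel G.Adj]
          (A B : Finset (Fin N)),
          Disjoint A B → A ∪ B = Finset.univ →
          (∀ u v, G.Adj u v → (u ∈ A ∧ v ∈ B) ∨ (u ∈ B ∧ v ∈ A)) →
          UpperRegular G ρ ξ →
          (N : ℝ) ≤ ρ * A.card / ξ →
          (∀ v ∈ A, 2 * ρ * A.card ≤ (G.degree v : ℝ)) →
          ∃ M : SimpleGraph.Subgraph G, M.IsMatching ∧ ∀ a ∈ A, a ∈ M.verts := by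
  intro ρ hρ hρ1
  refine ⟨ρ, hρ, ?_⟩
  intro ξ hξ hξρ N G _ A B hAB hABuniv hbip hreg hN hdeg
  classical
  set t : {x // x ∈ A} → Finset (Fin N) := fun a => G.neighborFinset ↑a with ht
  -- Hall's condition
  have hall : ∀ s : Finset {x // x ∈ A}, s.card ≤ (s.biUnion t).card := by
    intro s
    by_contra hcon
    push_neg at hcon
    have hs : s.Nonempty := by
      rw [← Finset.card_pos]
      omega
    obtain ⟨a0, ha0⟩ := hs
    set S : Finset (Fin N) := s.image Subtype.val with hS
    set T : Finset (Fin N) := s.biUnion t with hT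
    have hScard : S.card = s.card := Finset.card_image_of_injective s Subtype.coe_injective
    have hSA : S ⊆ A := by
      intro x hx
      obtain ⟨a, _, rfl⟩ := Finset.mem_image.mp hx
      exact a.2
    have hTB : T ⊆ B := by
      intro x hx
      obtain ⟨a, _, hx⟩ := Finset.mem_biUnion.mp hx
      have hadj : G.Adj ↑a x := (SimpleGraph.mem_neighborFinset _ _ _).mp hx
      rcases hbip _ _ hadj with ⟨_, h⟩ | ⟨h, _⟩
      · exact h
      · exact absurd h (Finset.disjoint_left.mp hAB a.2)
    have hdisj : Disjoint S T :=
      Finset.disjoint_left.mpr fun x hx hx' =>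
        Finset.disjoint_left.mp hAB (hSA hx) (hTB hx')
    -- neighborhoods of elements of S are inside T
    have hnbr : ∀ v ∈ S, G.neighborFinset v ⊆ T := by
      intro v hv
      obtain ⟨a, ha, rfl⟩ := Finset.mem_image.mp hv
      exact Finset.subset_biUnion_of_mem t ha
    -- lower bound on edges
    have hEdge : (∑ v ∈ S, G.degree v) ≤ edgesBetween G S T := by
      have hsub : S.biUnion (fun v => (G.neighborFinset v).image (fun w => (v, w))) ⊆
          (S ×ˢ T).filter fun p => G.Adj p.1 p.2 := by
        intro p hp
        obtain ⟨v, hv, hp⟩ := Finset.mem_biUnion.mp hp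
        obtain ⟨w, hw, rfl⟩ := Finset.mem_image.mp hp
        refine Finset.mem_filter.mpr ⟨Finset.mem_product.mpr ⟨hv, hnbr v hv hw⟩, ?_⟩
        exact (SimpleGraph.mem_neighborFinset _ _ _).mp hw
      calc (∑ v ∈ S, G.degree v)
          = (S.biUnion (fun v => (G.neighborFinset v).image (fun w => (v, w)))).card := by
            rw [Finset.card_biUnion]
            · refine Finset.sum_congr rfl fun v _ => ?_
              rw [Finset.card_image_of_injective _ (fun x y h => (Prod.mk.injEq _ _ _ _).mp h |>.2)]
              rfl
            · intro x hx y hy hxy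
              simp only [Finset.disjoint_left, Finset.mem_image]
              rintro p ⟨w, _, rfl⟩ ⟨w', _, h⟩
              exact hxy ((Prod.mk.injEq _ _ _ _).mp h).1.symm
        _ ≤ edgesBetween G S T := Finset.card_le_card hsub
    -- numeric setup
    have hAC : (0:ℝ) ≤ (A.card : ℝ) := Nat.cast_nonneg _
    have hxN : ξ * N ≤ ρ * A.card := by
      have := mul_le_mul_of_nonneg_left hN (le_of_lt hξ)
      calc ξ * N ≤ ξ * (ρ * A.card / ξ) := this
        _ = ρ * A.card := by field_simp
    have hdeg0 : 2 * ρ * A.card ≤ (G.degree ↑a0 : ℝ) := hdeg _ a0.2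
    have hTcard : (G.degree ↑a0 : ℝ) ≤ (T.card : ℝ) := by
      exact_mod_cast Finset.card_le_card (Finset.subset_biUnion_of_mem t ha0)
    have hTξ : ξ * N ≤ (T.card : ℝ) := by nlinarith
    have hST : (T.card : ℝ) < (S.card : ℝ) := by
      rw [hScard]; exact_mod_cast hcon
    have hSξ : ξ * N ≤ (S.card : ℝ) := le_of_lt (lt_of_le_of_lt hTξ hST)
    have hupper := hreg S T hdisj hSξ hTξ
    have hlower : 2 * ρ * A.card * S.card ≤ (edgesBetween G S T : ℝ) := by
      have h1 : (∑ v ∈ S, (2 * ρ * A.card : ℝ)) ≤ ∑ v ∈ S, (G.degree v : ℝ) :=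
        Finset.sum_le_sum fun v hv => hdeg v (hSA hv)
      have h2 : ((∑ v ∈ S, G.degree v : ℕ) : ℝ) ≤ (edgesBetween G S T : ℝ) := by
        exact_mod_cast hEdge
      rw [Finset.sum_const, nsmul_eq_mul] at h1
      push_cast at h2 ⊢
      linarith
    have hSpos : (0:ℝ) < (S.card : ℝ) := by
      have : (0:ℝ) ≤ (T.card : ℝ) := Nat.cast_nonneg _
      linarith
    have hSAcard : (S.card : ℝ) ≤ (A.card : ℝ) := by
      exact_mod_cast Finset.card_le_card hSA
    have hpos : (0:ℝ) < (ρ + ξ) * (S.card : ℝ) := mul_pos (by linarith) hSpos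
    have h3 : (ρ + ξ) * (S.card : ℝ) * (T.card : ℝ) < (ρ + ξ) * (S.card : ℝ) * (S.card : ℝ) :=
      mul_lt_mul_of_pos_left hST hpos
    have h4 : (ρ + ξ) * (S.card : ℝ) * (S.card : ℝ) ≤ (ρ + ξ) * (S.card : ℝ) * (A.card : ℝ) :=
      mul_le_mul_of_nonneg_left hSAcard hpos.le
    have h5 : (ρ + ξ) * (S.card : ℝ) * (A.card : ℝ) ≤ 2 * ρ * (S.card : ℝ) * (A.card : ℝ) := by
      nlinarith
    have heq : 2 * ρ * (A.card : ℝ) * (S.card : ℝ) = 2 * ρ * (S.card : ℝ) * (A.card : ℝ) := by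
      ring
    linarith
  obtain ⟨f, hinj, hf⟩ := (Finset.all_card_le_biUnion_card_iff_exists_injective t).mp hall
  have hadj : ∀ a : {x // x ∈ A}, G.Adj ↑a (f a) := fun a =>
    (SimpleGraph.mem_neighborFinset _ _ _).mp (hf a)
  exact exists_matching_of_injective G A B hAB hbip f hinj hadj
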